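/- arXiv:2111.04034 — 4 statements merged into one kernel-verified Lean document; each statement's English description precedes it below -/
import Mathlib

section
/- Every integer m appears as a coefficient of some cyclotomic polynomial: for every m ∈ ℤ there exist a positive integer n and an index j such that the coefficient of X^j in Φ_n(X) equals m. -/
open Polynomial ArithmeticFunction Finset
open scoped ArithmeticFunction.Moebius ArithmeticFunction.Omega

lemma coeff_comp_neg_X (P : ℚ[X]) (j : ℕ) : (P.comp (-X)).coeff j = (-1)^j * P.coeff j := by
  induction P using Polynomial.induction_on' with
  | add p q hp hq => simp [add_comp, hp, hq, mul_add]
  | monomial i a =>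
    have h1 : ((monomial i a).comp (-X) : ℚ[X]) = C (a * (-1)^i) * X ^ i := by
      rw [monomial_comp, map_mul, C_pow, C_neg, C_1]; ring
    rw [h1, coeff_C_mul, coeff_X_pow, coeff_monomial]
    rcases eq_or_ne j i with rfl | hij
    · simp; ring
    · simp [hij, Ne.symm hij]


lemma primeCounting_eq_card (M : ℕ) :
    Nat.primeCounting M = (Finset.filter Nat.Prime (Finset.range (M+1))).card := by
  rw [Nat.primeCounting, Nat.primeCounting', Nat.count_eq_card_filter_range]

lemma centralBinom_le (n : ℕ) (hn : 0 < n) :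
    Nat.centralBinom n ≤ (2*n) ^ (Nat.primeCounting (2*n)) := by
  have h2n : 0 < 2*n := by omega
  have hfac : ∀ p : ℕ, p ^ (Nat.centralBinom n).factorization p ≤ 2*n := by
    intro p; exact Nat.pow_factorization_choose_le h2n
  have hne : Nat.centralBinom n ≠ 0 := (Nat.centralBinom_pos n).ne'
  have hsupp : (Nat.centralBinom n).factorization.support ⊆
      Finset.filter Nat.Prime (Finset.range (2*n+1)) := by
    intro p hp
    have hprime : p.Prime := Nat.prime_of_mem_primeFactors hp
    have h1 : 1 ≤ (Nat.centralBinom n).factorization p := by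
      exact Nat.Prime.factorization_pos_of_dvd hprime hne (Nat.dvd_of_mem_primeFactors hp)
    have hple : p ≤ 2*n := by
      have := hfac p
      calc p = p^1 := (pow_one p).symm
        _ ≤ p ^ (Nat.centralBinom n).factorization p := Nat.pow_le_pow_right hprime.pos h1
        _ ≤ 2*n := this
    simp [Finset.mem_filter, Finset.mem_range, hprime]; omega
  calc Nat.centralBinom n
      = (Nat.centralBinom n).factorization.prod (fun p k => p ^ k) :=
        (Nat.factorization_prod_pow_eq_self hne).symm
    _ ≤ ∏ p ∈ (Nat.centralBinom n).factorization.support, (2*n) := by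
        apply Finset.prod_le_prod
        · intro i _; exact Nat.zero_le _
        · intro i _; exact hfac i
    _ = (2*n) ^ (Nat.centralBinom n).factorization.support.card := by
        rw [Finset.prod_const]
    _ ≤ (2*n) ^ (Nat.primeCounting (2*n)) := by
        apply Nat.pow_le_pow_right h2n
        rw [primeCounting_eq_card]
        exact Finset.card_le_card hsupp

lemma pi_two_pow_lower (k : ℕ) (hk : 3 ≤ k) :
    2^k < k * (Nat.primeCounting (2^k) + 1) := by
  set n := 2^(k-1) with hn
  have hn4 : 4 ≤ n := by
    calc (4:ℕ) = 2^2 := rfl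
    _ ≤ 2^(k-1) := Nat.pow_le_pow_right (by norm_num) (by omega)
  have h1 : 4^n < n * Nat.centralBinom n := Nat.four_pow_lt_mul_centralBinom n hn4
  have h2 : Nat.centralBinom n ≤ (2*n)^(Nat.primeCounting (2*n)) :=
    centralBinom_le n (by omega)
  have h2n : 2*n = 2^k := by
    rw [hn, ← pow_succ']; congr 1; omega
  have h4n : 4^n = 2^(2^k) := by
    have : (4:ℕ) = 2^2 := rfl
    rw [this, ← pow_mul, ← h2n]
  have key : 2^(2^k) < 2^(k-1) * (2^k)^(Nat.primeCounting (2^k)) := by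
    rw [← h4n, ← h2n, ← hn]
    calc 4^n < n * Nat.centralBinom n := h1
    _ ≤ n * (2*n)^(Nat.primeCounting (2*n)) := Nat.mul_le_mul le_rfl h2
  rw [← pow_mul] at key
  have key2 : (2:ℕ)^(2^k) < 2^(k-1 + k * Nat.primeCounting (2^k)) := by
    rw [pow_add]; exact key
  have := (Nat.pow_lt_pow_iff_right (a := 2) (by norm_num)).mp key2
  have hk1 : k - 1 < k := by omega
  calc 2^k < k - 1 + k * Nat.primeCounting (2^k) := this
  _ ≤ k * Nat.primeCounting (2^k) + k := by omega
  _ = k * (Nat.primeCounting (2^k) + 1) := by ring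

lemma pi_step (N : ℕ) :
    Nat.primeCounting (2*N) ≤ Nat.primeCounting N +
      (Finset.filter Nat.Prime (Finset.Ioc N (2*N))).card := by
  rw [primeCounting_eq_card, primeCounting_eq_card]
  have hsub : Finset.filter Nat.Prime (Finset.range (2*N+1)) ⊆
      Finset.filter Nat.Prime (Finset.range (N+1)) ∪
        Finset.filter Nat.Prime (Finset.Ioc N (2*N)) := by
    intro x hx
    simp only [Finset.mem_filter, Finset.mem_range, Finset.mem_union, Finset.mem_Ioc] at *
    rcases Nat.lt_or_ge x (N+1) with h | h
    · exact Or.inl ⟨h, hx.2⟩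
    · exact Or.inr ⟨⟨by omega, by omega⟩, hx.2⟩
  calc (Finset.filter Nat.Prime (Finset.range (2*N+1))).card
      ≤ _ := Finset.card_le_card hsub
  _ ≤ _ := Finset.card_union_le _ _

lemma aux_pow (j : ℕ) (h : 9 ≤ j) : 4*j^2 < 2^j := by
  induction j, h using Nat.le_induction with
  | base => norm_num
  | succ j hj ih =>
    have h2 : 4*(j+1)^2 ≤ 2*(4*j^2) := by nlinarith
    calc 4*(j+1)^2 ≤ 2*(4*j^2) := h2
    _ < 2*2^j := by omega
    _ = 2^(j+1) := by ring

lemma exists_clustered_primes (t : ℕ) :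
    ∃ N : ℕ, 2 ≤ N ∧ ∃ s : Finset ℕ, s.card = t ∧
      ∀ q ∈ s, Nat.Prime q ∧ N < q ∧ q ≤ 2*N := by
  have main : ∃ N : ℕ, 2 ≤ N ∧ t ≤ (Finset.filter Nat.Prime (Finset.Ioc N (2*N))).card := by
    by_contra hcon
    push_neg at hcon
    -- then π(2^k) ≤ 1 + (k-1)*t for all k ≥ 1
    have hbound : ∀ k : ℕ, 1 ≤ k → Nat.primeCounting (2^k) ≤ 1 + (k-1)*t := by
      intro k hk
      induction k, hk using Nat.le_induction with
      | base =>
        have : Nat.primeCounting 2 = 1 := by decide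
        simp [this]
      | succ k hk ih =>
        have hN : 2 ≤ 2^k := by
          calc (2:ℕ) = 2^1 := rfl
          _ ≤ 2^k := Nat.pow_le_pow_right (by norm_num) hk
        have hs := pi_step (2^k)
        have hc := hcon (2^k) hN
        have h2 : 2*2^k = 2^(k+1) := by ring
        rw [← h2]
        have : (k+1-1)*t = (k-1)*t + t := by
          have : k + 1 - 1 = (k-1) + 1 := by omega
          rw [this]; ring
        omega
    -- contradiction with lower bound
    set j := max t 9 with hj
    set k := 2*j with hk
    have hj9 : 9 ≤ j := le_max_right _ _
    have hjt : t ≤ j := le_max_left _ _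
    have hk3 : 3 ≤ k := by omega
    have hlow := pi_two_pow_lower k hk3
    have hup := hbound k (by omega)
    have hcomb : 2^k < k * (1 + (k-1)*t + 1) := by
      calc 2^k < k * (Nat.primeCounting (2^k) + 1) := hlow
      _ ≤ k * (1 + (k-1)*t + 1) := by
          apply Nat.mul_le_mul_left; omega
    have hcomb2 : 2^k < k^2*(t+2) := by
      calc 2^k < k * (1 + (k-1)*t + 1) := hcomb
      _ ≤ k * (k + k*t) := by
          apply Nat.mul_le_mul_left
          have : (k-1)*t ≤ k*t := Nat.mul_le_mul_right t (by omega)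
          omega
      _ = k^2*(t+1) := by ring
      _ ≤ k^2*(t+2) := Nat.mul_le_mul_left _ (by omega)
    have hbig : k^2*(t+2) < 2^k := by
      have h1 : 4*j^2 < 2^j := aux_pow j hj9
      have h2 : t + 2 < 2^j := by
        have : j < 2^j := Nat.lt_two_pow_self
        have h4 : j + 3 ≤ 2^j := by nlinarith
        omega
      have : k^2*(t+2) = (4*j^2)*(t+2) := by rw [hk]; ring
      rw [this]
      calc (4*j^2)*(t+2) < 2^j * 2^j :=
        mul_lt_mul' h1.le h2 (by omega) (by positivity)
      _ = 2^k := by rw [hk, ← pow_add]; congr 1; omega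
    omega
  obtain ⟨N, hN2, hNt⟩ := main
  obtain ⟨s, hs_sub, hs_card⟩ := Finset.exists_subset_card_eq hNt
  refine ⟨N, hN2, s, hs_card, ?_⟩
  intro q hq
  have := hs_sub hq
  simp only [Finset.mem_filter, Finset.mem_Ioc] at this
  exact ⟨this.2, this.1.1, this.1.2⟩


lemma cyclotomic_mul_prod_eq (n : ℕ) (hn0 : 0 < n) (hsq : Squarefree n) :
    cyclotomic n ℚ * ∏ d ∈ n.divisors.filter (fun d => μ d = -1), (X^(n/d) - 1) =
      ∏ d ∈ n.divisors.filter (fun d => μ d = 1), (X^(n/d) - 1) := by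
  classical
  have hpm : ∀ d ∈ n.divisors, μ d = 1 ∨ μ d = -1 := by
    intro d hd
    have hsd : Squarefree d := hsq.squarefree_of_dvd (Nat.dvd_of_mem_divisors hd)
    rw [moebius_apply_of_squarefree hsd]
    rcases Nat.even_or_odd (Ω d) with h | h
    · exact Or.inl h.neg_one_pow
    · exact Or.inr h.neg_one_pow
  set ι := algebraMap ℚ[X] (RatFunc ℚ) with hι
  have hinj : Function.Injective ι := IsFractionRing.injective ℚ[X] (RatFunc ℚ)
  apply hinj
  have hfne : ∀ d ∈ n.divisors, ι (X^(n/d) - 1) ≠ 0 := by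
    intro d hd
    rw [map_ne_zero_iff ι hinj]
    have hdvd := Nat.dvd_of_mem_divisors hd
    have hdpos : 0 < d := Nat.pos_of_mem_divisors hd
    have hdle : d ≤ n := Nat.le_of_dvd hn0 hdvd
    have he : 0 < n / d := Nat.div_pos hdle hdpos
    have := X_pow_sub_C_ne_zero (R := ℚ) he (1:ℚ)
    simpa using this
  have base := cyclotomic_eq_prod_X_pow_sub_one_pow_moebius (n := n) ℚ
  rw [Nat.prod_divisorsAntidiagonal (fun i j => ι (X ^ j - 1) ^ μ i)] at base
  rw [map_mul, map_prod, map_prod, base]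
  rw [← Finset.prod_filter_mul_prod_filter_not n.divisors (fun d => μ d = 1)
    (fun d => ι (X ^ (n/d) - 1) ^ μ d)]
  have hfilter : n.divisors.filter (fun d => ¬ μ d = 1) =
      n.divisors.filter (fun d => μ d = -1) := by
    apply Finset.filter_congr
    intro d hd
    rcases hpm d hd with h | h <;> simp [h]
  rw [hfilter]
  have e1 : ∏ d ∈ n.divisors.filter (fun d => μ d = 1), ι (X ^ (n/d) - 1) ^ μ d
      = ∏ d ∈ n.divisors.filter (fun d => μ d = 1), ι (X ^ (n/d) - 1) := by
    apply Finset.prod_congr rfl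
    intro d hd
    rw [(Finset.mem_filter.mp hd).2]
    norm_num
  have e2 : ∏ d ∈ n.divisors.filter (fun d => μ d = -1), ι (X ^ (n/d) - 1) ^ μ d
      = (∏ d ∈ n.divisors.filter (fun d => μ d = -1), ι (X ^ (n/d) - 1))⁻¹ := by
    rw [← Finset.prod_inv_distrib]
    apply Finset.prod_congr rfl
    intro d hd
    rw [(Finset.mem_filter.mp hd).2]
    norm_num
  rw [e1, e2]
  have hne : (∏ d ∈ n.divisors.filter (fun d => μ d = -1), ι (X ^ (n/d) - 1)) ≠ 0 := by
    rw [Finset.prod_ne_zero_iff]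
    intro d hd
    exact hfne d (Finset.mem_filter.mp hd).1
  exact inv_mul_cancel_right₀ hne _


lemma squarefree_prod_primes (s : Finset ℕ) (h : ∀ q ∈ s, Nat.Prime q) :
    Squarefree (∏ q ∈ s, q) := by
  induction s using Finset.induction_on with
  | empty => simpa using squarefree_one
  | @insert a s' ha ih =>
    rw [Finset.prod_insert ha]
    have hap : Nat.Prime a := h a (mem_insert_self a s')
    have hcop : Nat.Coprime a (∏ q ∈ s', q) :=
      Nat.Coprime.prod_right (fun q hq =>
        (Nat.coprime_primes hap (h q (mem_insert_of_mem hq))).mpr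
          (by rintro rfl; exact ha hq))
    exact (Nat.squarefree_mul hcop).mpr
      ⟨hap.prime.squarefree, ih (fun q hq => h q (mem_insert_of_mem hq))⟩

lemma mu_prod_primes (s : Finset ℕ) (h : ∀ q ∈ s, Nat.Prime q) :
    μ (∏ q ∈ s, q) = (-1)^s.card := by
  induction s using Finset.induction_on with
  | empty => simp
  | @insert a s' ha ih =>
    rw [Finset.prod_insert ha]
    have hap : Nat.Prime a := h a (mem_insert_self a s')
    have hcop : Nat.Coprime a (∏ q ∈ s', q) :=
      Nat.Coprime.prod_right (fun q hq =>
        (Nat.coprime_primes hap (h q (mem_insert_of_mem hq))).mpr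
          (by rintro rfl; exact ha hq))
    rw [isMultiplicative_moebius.map_mul_of_coprime hcop,
      moebius_apply_prime hap, ih (fun q hq => h q (mem_insert_of_mem hq)),
      Finset.card_insert_of_notMem ha, pow_succ]
    ring

lemma coeff_eq_of_X_pow_dvd (P Q : ℚ[X]) (k j : ℕ) (h : (X:ℚ[X])^k ∣ P - Q)
    (hj : j < k) : P.coeff j = Q.coeff j := by
  obtain ⟨R, hR⟩ := h
  have hP : P = Q + X^k * R := by linear_combination hR
  rw [hP, coeff_add, mul_comm, coeff_mul_X_pow', if_neg (by omega), add_zero]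

theorem key_coeff (s : Finset ℕ) (N : ℕ) (hN : 2 ≤ N)
    (hs : ∀ q ∈ s, Nat.Prime q ∧ N < q ∧ q ≤ 2*N)
    (hodd : Odd s.card)
    (p : ℕ) (hp : p ∈ s) (hpmax : ∀ q ∈ s, q ≤ p)
    (j : ℕ) (hj : j ≤ p) :
    ((cyclotomic (∏ q ∈ s, q) ℤ).coeff j : ℚ) =
      1 - ((s.filter (fun q => q ≤ j)).card : ℚ) := by
  classical
  set n := ∏ q ∈ s, q with hn
  have hprime : ∀ q ∈ s, Nat.Prime q := fun q h => (hs q h).1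
  have hq3 : ∀ q ∈ s, 2 < q := fun q h => lt_of_le_of_lt hN (hs q h).2.1
  have hn0 : 0 < n := Finset.prod_pos (fun q hq => (hprime q hq).pos)
  have hpn : p ∣ n := Finset.dvd_prod_of_mem _ hp
  have hp1 : 1 < p := by have := hq3 p hp; omega
  have hn1 : 1 < n := lt_of_lt_of_le hp1 (Nat.le_of_dvd hn0 hpn)
  have hsq : Squarefree n := squarefree_prod_primes s hprime
  have hmem_of_dvd : ∀ a : ℕ, Nat.Prime a → a ∣ n → a ∈ s := by
    intro a hap hdvd
    obtain ⟨q, hq, haq⟩ := (Prime.dvd_finset_prod_iff hap.prime _).mp hdvd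
    rwa [(Nat.prime_dvd_prime_iff_eq hap (hprime q hq)).mp haq]
  have hpair : ∀ a ∈ s, ∀ b ∈ s, a ≠ b → p < a + b ∧ p < a * b := by
    intro a ha b hb _
    have h1 : N < a := (hs a ha).2.1
    have h2 : N < b := (hs b hb).2.1
    have h3 : p ≤ 2*N := (hs p hp).2.2
    constructor
    · omega
    · have : (N+1)*(N+1) ≤ a*b := Nat.mul_le_mul h1 h2
      nlinarith
  have hdivclass : ∀ e : ℕ, e ∣ n → e = 1 ∨ e ∈ s ∨ p < e := by
    intro e he
    by_cases h1 : e = 1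
    · exact Or.inl h1
    obtain ⟨a, hap, hae⟩ := Nat.exists_prime_and_dvd h1
    have has : a ∈ s := hmem_of_dvd a hap (hae.trans he)
    by_cases hea : e = a
    · exact Or.inr (Or.inl (hea ▸ has))
    obtain ⟨f, rfl⟩ := hae
    have hf1 : f ≠ 1 := by rintro rfl; exact hea (mul_one a)
    obtain ⟨b, hbp, hbf⟩ := Nat.exists_prime_and_dvd hf1
    have hbe : b ∣ a * f := (hbf.trans (dvd_mul_left f a))
    have hbs : b ∈ s := hmem_of_dvd b hbp (hbe.trans he)
    have hab : a ≠ b := by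
      rintro rfl
      have : a * a ∣ n := (mul_dvd_mul_left a hbf).trans he
      exact hap.one_lt.ne' (Nat.isUnit_iff.mp (hsq a this))
    have hdvd2 : a*b ∣ a*f :=
      Nat.Coprime.mul_dvd_of_dvd_of_dvd ((Nat.coprime_primes hap hbp).mpr hab)
        (dvd_mul_right a f) hbe
    have hepos : 0 < a*f := Nat.pos_of_dvd_of_pos he hn0
    exact Or.inr (Or.inr (lt_of_lt_of_le (hpair a has b hbs hab).2 (Nat.le_of_dvd hepos hdvd2)))
  have hcards : Odd s.card ∨ Even s.card := (Nat.even_or_odd s.card).symm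
  -- Möbius values
  have hnq : ∀ q ∈ s, n / q = ∏ x ∈ s.erase q, x := by
    intro q hq
    have h1 : q * ∏ x ∈ s.erase q, x = n := Finset.mul_prod_erase s (fun x => x) hq
    rw [← h1, Nat.mul_div_cancel_left _ (hprime q hq).pos]
  have hdivn : ∀ q ∈ s, n / q ∣ n := fun q hq => Nat.div_dvd_of_dvd (Finset.dvd_prod_of_mem _ hq)
  have hinv : ∀ q ∈ s, n / (n / q) = q :=
    fun q hq => Nat.div_div_self (Finset.dvd_prod_of_mem _ hq) hn0.ne'
  have hμn : ∀ u : Finset ℕ, u ⊆ s → μ (∏ x ∈ u, x) = (-1)^u.card :=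
    fun u hu => mu_prod_primes u (fun q hq => hprime q (hu hq))
  have hμdiv : ∀ q ∈ s, μ (n / q) = (-1)^(s.card - 1) := by
    intro q hq
    rw [hnq q hq, hμn (s.erase q) (Finset.erase_subset q s), Finset.card_erase_of_mem hq]
  -- the AB identity
  have hAB := cyclotomic_mul_prod_eq n hn0 hsq
  -- quotient ring setup
  set I : Ideal ℚ[X] := Ideal.span {(X:ℚ[X])^(p+1)} with hI
  set π : ℚ[X] →+* ℚ[X] ⧸ I := Ideal.Quotient.mk I with hπdef
  have hπ0 : ∀ e : ℕ, p < e → π ((X:ℚ[X])^e) = 0 := by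
    intro e he
    rw [hπdef]
    rw [Ideal.Quotient.eq_zero_iff_mem, hI, Ideal.mem_span_singleton]
    exact ⟨X^(e-(p+1)), by rw [← pow_add]; congr 1; omega⟩
  have hπbig : ∀ e : ℕ, p < e → π ((X:ℚ[X])^e - 1) = -1 := by
    intro e he
    rw [map_sub, map_one, hπ0 e he, zero_sub]
  -- apply π to hAB
  have hABπ := congrArg π hAB
  rw [map_mul, map_prod, map_prod] at hABπ
  -- compute the μ = -1 side
  set Dm := n.divisors.filter (fun d => μ d = -1) with hDm
  set Dp := n.divisors.filter (fun d => μ d = 1) with hDp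
  have ht1 : 1 ≤ s.card := Finset.card_pos.mpr ⟨p, hp⟩
  have hμneg : μ n = -1 := by
    rw [hn, hμn s (Finset.Subset.refl s)]; exact hodd.neg_one_pow
  have hμq1 : ∀ q ∈ s, μ (n / q) = 1 := by
    intro q hq
    rw [hμdiv q hq]
    exact (Nat.Odd.sub_odd hodd odd_one).neg_one_pow
  have hdinv : ∀ d, d ∣ n → d = n / (n / d) := by
    intro d hdvd
    rw [Nat.div_div_self hdvd hn0.ne']
  have hDm_small : Dm.filter (fun d => n/d ≤ p) = {n} := by
    ext d
    simp only [hDm, Finset.mem_filter, Finset.mem_singleton, Nat.mem_divisors]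
    constructor
    · rintro ⟨⟨⟨hdvd, _⟩, hμ⟩, hle⟩
      rcases hdivclass (n/d) (Nat.div_dvd_of_dvd hdvd) with h1 | h2 | h3
      · have h2 := Nat.div_mul_cancel hdvd
        rw [h1, one_mul] at h2; exact h2
      · exfalso
        rw [hdinv d hdvd, hμq1 _ h2] at hμ
        norm_num at hμ
      · omega
    · rintro rfl
      exact ⟨⟨⟨dvd_rfl, hn0.ne'⟩, hμneg⟩, by rw [Nat.div_self hn0]; omega⟩
  have hDp_small : Dp.filter (fun d => n/d ≤ p) = s.image (fun q => n/q) := by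
    ext d
    simp only [hDp, Finset.mem_filter, Finset.mem_image, Nat.mem_divisors]
    constructor
    · rintro ⟨⟨⟨hdvd, _⟩, hμ⟩, hle⟩
      rcases hdivclass (n/d) (Nat.div_dvd_of_dvd hdvd) with h1 | h2 | h3
      · exfalso
        have h2 := Nat.div_mul_cancel hdvd
        rw [h1, one_mul] at h2
        rw [h2, hμneg] at hμ; norm_num at hμ
      · exact ⟨n/d, h2, (hdinv d hdvd).symm⟩
      · omega
    · rintro ⟨q, hq, rfl⟩
      refine ⟨⟨⟨hdivn q hq, hn0.ne'⟩, hμq1 q hq⟩, ?_⟩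
      rw [hinv q hq]; exact hpmax q hq
  have hπDm : ∏ d ∈ Dm, π (X^(n/d) - 1) =
      π ((X:ℚ[X]) - 1) * (-1)^((Dm.filter (fun d => ¬ n/d ≤ p)).card) := by
    rw [← Finset.prod_filter_mul_prod_filter_not Dm (fun d => n/d ≤ p)]
    congr 1
    · rw [hDm_small, Finset.prod_singleton, Nat.div_self hn0, pow_one]
    · rw [Finset.prod_congr rfl (fun d hd => hπbig (n/d) (by
        simp only [Finset.mem_filter] at hd; omega)), Finset.prod_const]
  have hπDp : ∏ d ∈ Dp, π (X^(n/d) - 1) =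
      (∏ q ∈ s, π ((X:ℚ[X])^q - 1)) * (-1)^((Dp.filter (fun d => ¬ n/d ≤ p)).card) := by
    rw [← Finset.prod_filter_mul_prod_filter_not Dp (fun d => n/d ≤ p)]
    congr 1
    · rw [hDp_small, Finset.prod_image (fun q hq q' hq' h => by
        rw [← hinv q hq, h, hinv q' hq'])]
      exact Finset.prod_congr rfl (fun q hq => by rw [hinv q hq])
    · rw [Finset.prod_congr rfl (fun d hd => hπbig (n/d) (by
        simp only [Finset.mem_filter] at hd; omega)), Finset.prod_const]
  have hps : ∀ u : Finset ℕ, u ⊆ s →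
      ∏ q ∈ u, π ((X:ℚ[X])^q - 1) = (-1)^u.card * (1 - ∑ q ∈ u, π ((X:ℚ[X])^q)) := by
    intro u
    induction u using Finset.induction_on with
    | empty => intro _; simp
    | @insert a u' ha ih =>
      intro hu
      have hau : a ∈ s := hu (Finset.mem_insert_self _ _)
      have hu' : u' ⊆ s := fun x hx => hu (Finset.mem_insert_of_mem hx)
      have key0 : π ((X:ℚ[X])^a) * ∑ q ∈ u', π ((X:ℚ[X])^q) = 0 := by
        rw [Finset.mul_sum]
        apply Finset.sum_eq_zero
        intro q hq
        have hneq : a ≠ q := by rintro rfl; exact ha hq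
        rw [← map_mul, ← pow_add]
        exact hπ0 _ (hpair a hau q (hu' hq) hneq).1
      rw [Finset.prod_insert ha, ih hu', Finset.sum_insert ha,
        Finset.card_insert_of_notMem ha, map_sub, map_one]
      have expand : (π ((X:ℚ[X])^a) - 1) * ((-1)^u'.card * (1 - ∑ q ∈ u', π ((X:ℚ[X])^q))) =
          (-1)^(u'.card+1) * (1 - (π ((X:ℚ[X])^a) + ∑ q ∈ u', π ((X:ℚ[X])^q)))
          - (-1)^(u'.card) * (π ((X:ℚ[X])^a) * ∑ q ∈ u', π ((X:ℚ[X])^q)) := by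
        ring
      rw [expand, key0]; ring
  rw [hπDm, hπDp, hps s (Finset.Subset.refl s)] at hABπ
  set S := ∑ q ∈ s, π ((X:ℚ[X])^q) with hS
  set bm := (Dm.filter (fun d => ¬ n/d ≤ p)).card with hbm
  set bp := (Dp.filter (fun d => ¬ n/d ≤ p)).card with hbp
  have hor : π (cyclotomic n ℚ * ((X:ℚ[X]) - 1)) = π (1 - ∑ q ∈ s, (X:ℚ[X])^q)
      ∨ π (cyclotomic n ℚ * ((X:ℚ[X]) - 1)) = π ((∑ q ∈ s, (X:ℚ[X])^q) - 1) := by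
    have hπ1S : π (1 - ∑ q ∈ s, (X:ℚ[X])^q) = 1 - S := by
      rw [map_sub, map_one, map_sum]
    have hπS1 : π ((∑ q ∈ s, (X:ℚ[X])^q) - 1) = S - 1 := by
      rw [map_sub, map_one, map_sum]
    have hmerge : (((-1:ℚ[X] ⧸ I))^s.card * (1 - S)) * (-1)^bp = (-1)^(s.card+bp) * (1-S) := by
      rw [pow_add]; ring
    rw [hmerge] at hABπ
    have E : ∀ k : ℕ, Even k → ((-1:ℚ[X] ⧸ I))^k = 1 := fun k hk => by
      rcases hk with ⟨r, rfl⟩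
      rw [← two_mul, pow_mul]; norm_num
    have O : ∀ k : ℕ, Odd k → ((-1:ℚ[X] ⧸ I))^k = -1 := fun k hk => by
      rcases hk with ⟨r, rfl⟩
      rw [pow_add, pow_mul]; norm_num
    rcases Nat.even_or_odd bm with h1 | h1 <;>
      rcases Nat.even_or_odd (s.card + bp) with h2 | h2
    · rw [E bm h1,
        E _ h2] at hABπ
      left; rw [map_mul, hπ1S]; linear_combination hABπ
    · rw [E bm h1,
        O _ h2] at hABπ
      right; rw [map_mul, hπS1]; linear_combination hABπ
    · rw [O bm h1,
        E _ h2] at hABπ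
      right; rw [map_mul, hπS1]; linear_combination -hABπ
    · rw [O bm h1,
        O _ h2] at hABπ
      left; rw [map_mul, hπ1S]; linear_combination -hABπ
  have hsum0 : ∀ k : ℕ, (∑ q ∈ s, (X:ℚ[X])^q).coeff k = if k ∈ s then 1 else 0 := by
    intro k
    rw [finset_sum_coeff]
    rw [Finset.sum_congr rfl (fun q _ => coeff_X_pow q k)]
    exact Finset.sum_ite_eq s k (fun _ => (1:ℚ))
  have hL0 : (cyclotomic n ℚ * ((X:ℚ[X]) - 1)).coeff 0 = -1 := by
    rw [mul_coeff_zero, cyclotomic_coeff_zero ℚ hn1]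
    simp
  have h0s : (0:ℕ) ∉ s := fun h => Nat.not_prime_zero (hprime 0 h)
  have hdvd : (X:ℚ[X])^(p+1) ∣
      cyclotomic n ℚ * ((X:ℚ[X]) - 1) - ((∑ q ∈ s, (X:ℚ[X])^q) - 1) := by
    rcases hor with h | h
    · exfalso
      have hmem : cyclotomic n ℚ * ((X:ℚ[X]) - 1) - (1 - ∑ q ∈ s, (X:ℚ[X])^q) ∈ I :=
        Ideal.Quotient.eq.mp h
      rw [hI, Ideal.mem_span_singleton] at hmem
      have := coeff_eq_of_X_pow_dvd _ _ (p+1) 0 hmem (by omega)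
      rw [hL0, coeff_sub, hsum0 0] at this
      simp [h0s] at this
      norm_num at this
    · have hmem : cyclotomic n ℚ * ((X:ℚ[X]) - 1) - ((∑ q ∈ s, (X:ℚ[X])^q) - 1) ∈ I :=
        Ideal.Quotient.eq.mp h
      rwa [hI, Ideal.mem_span_singleton] at hmem
  have hcoeffs : ∀ k, k ≤ p →
      (cyclotomic n ℚ * ((X:ℚ[X]) - 1)).coeff k = ((∑ q ∈ s, (X:ℚ[X])^q) - 1).coeff k :=
    fun k hk => coeff_eq_of_X_pow_dvd _ _ (p+1) k hdvd (by omega)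
  have main : ∀ k, k ≤ p →
      (cyclotomic n ℚ).coeff k = 1 - ((s.filter (fun q => q ≤ k)).card : ℚ) := by
    intro k
    induction k with
    | zero =>
      intro _
      rw [cyclotomic_coeff_zero ℚ hn1]
      have : s.filter (fun q => q ≤ 0) = ∅ := by
        apply Finset.filter_false_of_mem
        intro q hq
        have := hq3 q hq
        omega
      rw [this]
      simp
    | succ k ih =>
      intro hk1
      have hk : k ≤ p := by omega
      have hck := hcoeffs (k+1) hk1
      have hL : (cyclotomic n ℚ * ((X:ℚ[X]) - 1)).coeff (k+1) =
          (cyclotomic n ℚ).coeff k - (cyclotomic n ℚ).coeff (k+1) := by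
        rw [mul_sub, mul_one, coeff_sub, coeff_mul_X]
      have hR : ((∑ q ∈ s, (X:ℚ[X])^q) - 1).coeff (k+1) =
          (if (k+1) ∈ s then (1:ℚ) else 0) := by
        rw [coeff_sub, hsum0 (k+1)]
        simp [coeff_one]
      have hcard : ((s.filter (fun q => q ≤ k+1)).card : ℚ) =
          ((s.filter (fun q => q ≤ k)).card : ℚ) + (if (k+1) ∈ s then (1:ℚ) else 0) := by
        split_ifs with hmem
        · have hins : s.filter (fun q => q ≤ k+1) = insert (k+1) (s.filter (fun q => q ≤ k)) := by
            ext x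
            simp only [Finset.mem_filter, Finset.mem_insert]
            constructor
            · rintro ⟨hx, hle⟩
              rcases eq_or_ne x (k+1) with rfl | hne
              · exact Or.inl rfl
              · exact Or.inr ⟨hx, by omega⟩
            · rintro (rfl | ⟨hx, hle⟩)
              · exact ⟨hmem, le_refl _⟩
              · exact ⟨hx, by omega⟩
          rw [hins, Finset.card_insert_of_notMem (by
            simp only [Finset.mem_filter]
            rintro ⟨_, hle⟩
            omega)]
          push_cast
          ring
        · have hsame : s.filter (fun q => q ≤ k+1) = s.filter (fun q => q ≤ k) := by
            ext x
            simp only [Finset.mem_filter]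
            constructor
            · rintro ⟨hx, hle⟩
              have : x ≠ k+1 := fun h => hmem (h ▸ hx)
              exact ⟨hx, by omega⟩
            · rintro ⟨hx, hle⟩
              exact ⟨hx, by omega⟩
          rw [hsame]
          ring
      have hihk := ih hk
      rw [hL, hR] at hck
      rw [hcard]
      linarith
  have hfin := main j hj
  rw [← map_cyclotomic_int n ℚ, coeff_map] at hfin
  rw [← hfin]
  norm_num


lemma prod_divisors_two_mul (n : ℕ) (hodd : Odd n) (h0 : 0 < n) (f : ℕ → ℚ[X]) :
    ∏ d ∈ (2*n).divisors, f d = (∏ d ∈ n.divisors, f d) * ∏ d ∈ n.divisors, f (2*d) := by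
  have hnodd : ¬ (2 ∣ n) := by
    have := Nat.odd_iff.mp hodd; omega
  have himg : (2*n).divisors = n.divisors ∪ n.divisors.image (fun d => 2*d) := by
    ext d
    simp only [Nat.mem_divisors, Finset.mem_union, Finset.mem_image]
    constructor
    · rintro ⟨hdvd, _⟩
      by_cases h2d : 2 ∣ d
      · obtain ⟨e, rfl⟩ := h2d
        right
        refine ⟨e, ⟨?_, h0.ne'⟩, rfl⟩
        exact (Nat.mul_dvd_mul_iff_left (by norm_num : 0 < 2)).mp hdvd
      · left
        refine ⟨?_, h0.ne'⟩
        have hcop : Nat.Coprime d 2 := by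
          rw [Nat.coprime_comm]
          exact (Nat.Prime.coprime_iff_not_dvd Nat.prime_two).mpr h2d
        exact hcop.dvd_of_dvd_mul_right (by rwa [mul_comm] at hdvd)
    · rintro (⟨hdvd, _⟩ | ⟨e, ⟨hdvd, _⟩, rfl⟩)
      · exact ⟨hdvd.mul_left 2, by omega⟩
      · exact ⟨mul_dvd_mul_left 2 hdvd, by omega⟩
  have hdisj : Disjoint n.divisors (n.divisors.image (fun d => 2*d)) := by
    rw [Finset.disjoint_left]
    rintro a ha hb
    obtain ⟨e, _, rfl⟩ := Finset.mem_image.mp hb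
    exact hnodd ((dvd_mul_right 2 e).trans (Nat.dvd_of_mem_divisors ha))
  rw [himg, Finset.prod_union hdisj,
    Finset.prod_image (fun a _ b _ h => by omega)]

lemma cyclotomic_two_mul : ∀ n : ℕ, 1 < n → Odd n →
    cyclotomic (2*n) ℚ = (cyclotomic n ℚ).comp (-X) := by
  intro n
  induction n using Nat.strong_induction_on with
  | _ n ih =>
  intro h1 hodd
  have hn0 : 0 < n := by omega
  have hprodeq : ∏ d ∈ n.divisors, cyclotomic (2*d) ℚ = X^n + 1 := by
    have h2n : 0 < 2*n := by omega
    have h := prod_cyclotomic_eq_X_pow_sub_one h2n ℚ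
    rw [prod_divisors_two_mul n hodd hn0 (fun d => cyclotomic d ℚ),
      prod_cyclotomic_eq_X_pow_sub_one hn0 ℚ] at h
    have hne : (X^n - 1 : ℚ[X]) ≠ 0 := by
      have := X_pow_sub_C_ne_zero (R := ℚ) hn0 1
      simpa using this
    apply mul_left_cancel₀ hne
    rw [h, two_mul, pow_add]
    ring
  have hprodneg : ∏ d ∈ n.divisors, (cyclotomic d ℚ).comp (-X) = -((X:ℚ[X])^n + 1) := by
    rw [← Polynomial.prod_comp, prod_cyclotomic_eq_X_pow_sub_one hn0 ℚ, sub_comp, pow_comp, X_comp,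
      one_comp, hodd.neg_pow]
    ring
  have hsplit1 : ∏ d ∈ n.divisors, cyclotomic (2*d) ℚ =
      cyclotomic (2*n) ℚ * ∏ d ∈ n.properDivisors, cyclotomic (2*d) ℚ := by
    rw [← Nat.insert_self_properDivisors hn0.ne',
      Finset.prod_insert Nat.self_notMem_properDivisors]
  have hsplit2 : ∏ d ∈ n.divisors, (cyclotomic d ℚ).comp (-X) =
      (cyclotomic n ℚ).comp (-X) * ∏ d ∈ n.properDivisors, (cyclotomic d ℚ).comp (-X) := by
    rw [← Nat.insert_self_properDivisors hn0.ne',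
      Finset.prod_insert Nat.self_notMem_properDivisors]
  have hproper : ∏ d ∈ n.properDivisors, cyclotomic (2*d) ℚ =
      -∏ d ∈ n.properDivisors, (cyclotomic d ℚ).comp (-X) := by
    have h1mem : 1 ∈ n.properDivisors := Nat.one_mem_properDivisors_iff_one_lt.mpr h1
    rw [← Finset.insert_erase h1mem, Finset.prod_insert (Finset.notMem_erase _ _),
      Finset.prod_insert (Finset.notMem_erase _ _)]
    have hΦ2 : cyclotomic (2*1) ℚ = X + 1 := by norm_num [cyclotomic_two]
    have hΦ1 : (cyclotomic 1 ℚ).comp (-X) = -(X+1) := by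
      rw [cyclotomic_one, sub_comp, X_comp, one_comp]; ring
    have hrest : ∏ d ∈ (n.properDivisors.erase 1), cyclotomic (2*d) ℚ =
        ∏ d ∈ (n.properDivisors.erase 1), (cyclotomic d ℚ).comp (-X) := by
      apply Finset.prod_congr rfl
      intro d hd
      have hd1 : d ≠ 1 := (Finset.mem_erase.mp hd).1
      have hdp := (Finset.mem_erase.mp hd).2
      rw [Nat.mem_properDivisors] at hdp
      have hddvd : d ∣ n := hdp.1
      have hdn : d < n := hdp.2
      have hdpos : 0 < d := Nat.pos_of_dvd_of_pos hddvd hn0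
      have hdodd : Odd d := by
        rw [Nat.odd_iff]
        have h2 : ¬ 2 ∣ d := fun h => by
          have h3 := h.trans hddvd
          have := Nat.odd_iff.mp hodd
          omega
        omega
      exact ih d hdn (by omega) hdodd
    rw [hΦ2, hΦ1, hrest]
    ring
  have hPne : ∏ d ∈ n.properDivisors, (cyclotomic d ℚ).comp (-X) ≠ 0 := by
    rw [Finset.prod_ne_zero_iff]
    intro d _ hzero
    have h2 := congrArg (fun P : ℚ[X] => P.comp (-X)) hzero
    simp only [comp_neg_X_comp_neg_X, zero_comp] at h2
    exact cyclotomic_ne_zero d ℚ h2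
  have hcombine := hprodeq
  rw [hsplit1, hproper] at hcombine
  have hcombine2 := hprodneg
  rw [hsplit2] at hcombine2
  apply mul_right_cancel₀ hPne
  linear_combination -hcombine - hcombine2


lemma cyclo_coeff_cast (m k : ℕ) :
    ((cyclotomic m ℤ).coeff k : ℚ) = (cyclotomic m ℚ).coeff k := by
  rw [← map_cyclotomic_int m ℚ, coeff_map]
  simp

lemma key_coeff_two (s : Finset ℕ) (N : ℕ) (hN : 2 ≤ N)
    (hs : ∀ q ∈ s, Nat.Prime q ∧ N < q ∧ q ≤ 2*N)
    (hodd : Odd s.card)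
    (p : ℕ) (hp : p ∈ s) (hpmax : ∀ q ∈ s, q ≤ p)
    (j : ℕ) (hj : j ≤ p) :
    ((cyclotomic (2*(∏ q ∈ s, q)) ℤ).coeff j : ℚ) =
      (-1)^j * (1 - ((s.filter (fun q => q ≤ j)).card : ℚ)) := by
  classical
  have base := key_coeff s N hN hs hodd p hp hpmax j hj
  set n := ∏ q ∈ s, q with hn
  have hprime : ∀ q ∈ s, Nat.Prime q := fun q h => (hs q h).1
  have hn0 : 0 < n := Finset.prod_pos (fun q hq => (hprime q hq).pos)
  have hpn : p ∣ n := Finset.dvd_prod_of_mem _ hp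
  have hp2 : 2 < p := lt_of_le_of_lt hN (hs p hp).2.1
  have hn1 : 1 < n := lt_of_lt_of_le (by omega) (Nat.le_of_dvd hn0 hpn)
  have hnodd : Odd n := by
    rw [Nat.odd_iff]
    have h2 : ¬ 2 ∣ n := by
      intro h
      obtain ⟨q, hq, h2q⟩ := (Prime.dvd_finset_prod_iff Nat.prime_two.prime _).mp h
      have heq : 2 = q := (Nat.prime_dvd_prime_iff_eq Nat.prime_two (hprime q hq)).mp h2q
      have := (hs q hq).2.1
      omega
    omega
  have hcomp := cyclotomic_two_mul n hn1 hnodd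
  rw [cyclo_coeff_cast, hcomp, coeff_comp_neg_X, ← cyclo_coeff_cast, base]

lemma suzuki_main (t : ℕ) (ht : Odd t) (h3 : 3 ≤ t) :
    ∃ n : ℕ, 0 < n ∧ ∃ j j' : ℕ,
      ((cyclotomic n ℤ).coeff j : ℚ) = 1 - t ∧
      ((cyclotomic n ℤ).coeff j' : ℚ) = 2 - t ∧
      ((cyclotomic (2*n) ℤ).coeff j : ℚ) = t - 1 ∧
      ((cyclotomic (2*n) ℤ).coeff j' : ℚ) = t - 2 := by
  classical
  obtain ⟨N, hN2, s, hcard, hs⟩ := exists_clustered_primes t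
  have hne : s.Nonempty := Finset.card_pos.mp (by omega)
  set p := s.max' hne with hpdef
  have hp : p ∈ s := s.max'_mem hne
  have hpmax : ∀ q ∈ s, q ≤ p := fun q hq => s.le_max' q hq
  have hq2 : ∀ q ∈ s, 2 < q := fun q hq => lt_of_le_of_lt hN2 (hs q hq).2.1
  have hoddq : ∀ q ∈ s, q % 2 = 1 := fun q hq =>
    Nat.odd_iff.mp ((hs q hq).1.odd_of_ne_two (by have := hq2 q hq; omega))
  have hp2 : 2 < p := hq2 p hp
  have hj' : p - 2 ≤ p := by omega
  have hfull : s.filter (fun q => q ≤ p) = s := Finset.filter_true_of_mem hpmax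
  have herase : s.filter (fun q => q ≤ p - 2) = s.erase p := by
    ext q
    simp only [Finset.mem_filter, Finset.mem_erase]
    constructor
    · rintro ⟨hq, hle⟩
      exact ⟨by omega, hq⟩
    · rintro ⟨hne', hq⟩
      have h1 := hpmax q hq
      have h2 := hoddq q hq
      have h3 := hoddq p hp
      exact ⟨hq, by omega⟩
  have hcard2 : (s.erase p).card = t - 1 := by rw [Finset.card_erase_of_mem hp, hcard]
  have ht' : Odd s.card := hcard ▸ ht
  have h1 := key_coeff s N hN2 hs ht' p hp hpmax p le_rfl
  have h2 := key_coeff s N hN2 hs ht' p hp hpmax (p-2) hj'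
  have h3 := key_coeff_two s N hN2 hs ht' p hp hpmax p le_rfl
  have h4 := key_coeff_two s N hN2 hs ht' p hp hpmax (p-2) hj'
  rw [hfull, hcard] at h1 h3
  rw [herase, hcard2] at h2 h4
  have hppow : ((-1:ℚ))^p = -1 := Odd.neg_one_pow (Nat.odd_iff.mpr (hoddq p hp))
  have hppow2 : ((-1:ℚ))^(p-2) = -1 :=
    Odd.neg_one_pow (Nat.odd_iff.mpr (by have := hoddq p hp; omega))
  rw [hppow] at h3
  rw [hppow2] at h4
  refine ⟨∏ q ∈ s, q, Finset.prod_pos (fun q hq => (hs q hq).1.pos), p, p-2, h1, ?_, ?_, ?_⟩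
  · rw [h2, Nat.cast_sub (by omega)]
    push_cast
    ring
  · rw [h3]
    ring
  · rw [h4, Nat.cast_sub (by omega)]
    push_cast
    ring

theorem every_integer_is_cyclotomic_coeff (m : ℤ) :
    ∃ n j : ℕ, 0 < n ∧ (cyclotomic n ℤ).coeff j = m := by
  by_cases hm2 : 2 ≤ m
  · rcases Int.even_or_odd m with he | ho
    · -- m even, m ≥ 2 : t = m+1
      set t := (m+1).toNat with htdef
      have htz : (t:ℤ) = m+1 := Int.toNat_of_nonneg (by omega)
      have hoddt : Odd t := by
        obtain ⟨k, hk⟩ := he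
        rw [Nat.odd_iff]
        omega
      obtain ⟨n, hn, j, j', _, _, h3, _⟩ := suzuki_main t hoddt (by omega)
      refine ⟨2*n, j, by omega, ?_⟩
      have : ((cyclotomic (2*n) ℤ).coeff j : ℚ) = (m:ℚ) := by
        rw [h3]
        have : (t:ℚ) = (m:ℚ)+1 := by exact_mod_cast htz
        rw [this]; ring
      exact_mod_cast this
    · -- m odd, m ≥ 3 : t = m+2
      set t := (m+2).toNat with htdef
      have htz : (t:ℤ) = m+2 := Int.toNat_of_nonneg (by omega)
      have hoddt : Odd t := by
        obtain ⟨k, hk⟩ := ho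
        rw [Nat.odd_iff]
        omega
      have hm3 : 3 ≤ m := by obtain ⟨k, hk⟩ := ho; omega
      obtain ⟨n, hn, j, j', _, _, _, h4⟩ := suzuki_main t hoddt (by omega)
      refine ⟨2*n, j', by omega, ?_⟩
      have : ((cyclotomic (2*n) ℤ).coeff j' : ℚ) = (m:ℚ) := by
        rw [h4]
        have : (t:ℚ) = (m:ℚ)+2 := by exact_mod_cast htz
        rw [this]; ring
      exact_mod_cast this
  · by_cases hm1 : m ≤ -1
    · rcases Int.even_or_odd m with he | ho
      · -- m even, m ≤ -2 : t = 1-m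
        set t := (1-m).toNat with htdef
        have htz : (t:ℤ) = 1-m := Int.toNat_of_nonneg (by omega)
        have hoddt : Odd t := by
          obtain ⟨k, hk⟩ := he
          rw [Nat.odd_iff]
          omega
        have hm2' : m ≤ -2 := by obtain ⟨k, hk⟩ := he; omega
        obtain ⟨n, hn, j, j', h1, _, _, _⟩ := suzuki_main t hoddt (by omega)
        refine ⟨n, j, hn, ?_⟩
        have : ((cyclotomic n ℤ).coeff j : ℚ) = (m:ℚ) := by
          rw [h1]
          have : (t:ℚ) = 1-(m:ℚ) := by exact_mod_cast htz
          rw [this]; ring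
        exact_mod_cast this
      · -- m odd, m ≤ -1 : t = 2-m
        set t := (2-m).toNat with htdef
        have htz : (t:ℤ) = 2-m := Int.toNat_of_nonneg (by omega)
        have hoddt : Odd t := by
          obtain ⟨k, hk⟩ := ho
          rw [Nat.odd_iff]
          omega
        obtain ⟨n, hn, j, j', _, h2, _, _⟩ := suzuki_main t hoddt (by omega)
        refine ⟨n, j', hn, ?_⟩
        have : ((cyclotomic n ℤ).coeff j' : ℚ) = (m:ℚ) := by
          rw [h2]
          have : (t:ℚ) = 2-(m:ℚ) := by exact_mod_cast htz
          rw [this]; ring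
        exact_mod_cast this
    · -- m = 0 or m = 1
      have : m = 0 ∨ m = 1 := by omega
      rcases this with rfl | rfl
      · exact ⟨1, 2, one_pos, by simp [cyclotomic_one, coeff_X, coeff_one]⟩
      · exact ⟨1, 1, one_pos, by simp [cyclotomic_one, coeff_X, coeff_one]⟩
end

section
/- For every integer n > 1, the coefficient of X^1 in Φ_n(X) equals −μ(n), where μ is the Möbius function. -/
open Polynomial Finset

lemma coeff_one_mul' (p q : ℤ[X]) :
    (p * q).coeff 1 = p.coeff 0 * q.coeff 1 + p.coeff 1 * q.coeff 0 := by
  rw [coeff_mul, Finset.Nat.sum_antidiagonal_eq_sum_range_succ_mk]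
  simp [Finset.sum_range_succ]

lemma prod_coeff01 (s : Finset ℕ) (f : ℕ → ℤ[X]) (h0 : ∀ i ∈ s, (f i).coeff 0 = 1) :
    (∏ i ∈ s, f i).coeff 0 = 1 ∧ (∏ i ∈ s, f i).coeff 1 = ∑ i ∈ s, (f i).coeff 1 := by
  classical
  induction s using Finset.induction_on with
  | empty => simp [Polynomial.coeff_one]
  | @insert a s hx ih =>
    have h0' : ∀ i ∈ s, (f i).coeff 0 = 1 := fun i hi => h0 i (mem_insert_of_mem hi)
    obtain ⟨H0, H1⟩ := ih h0'
    rw [Finset.prod_insert hx, Finset.sum_insert hx]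
    constructor
    · rw [mul_coeff_zero, h0 a (mem_insert_self a s), H0, one_mul]
    · rw [coeff_one_mul', h0 a (mem_insert_self a s), H0, H1]; ring

theorem cyclotomic_coeff_one (n : ℕ) (hn : 1 < n) :
    (cyclotomic n ℤ).coeff 1 = -(ArithmeticFunction.moebius n) := by
  induction n using Nat.strong_induction_on with
  | _ n ih =>
  have hpos : 0 < n := by omega
  set S : Finset ℕ := (n.divisors.erase 1).erase n with hS
  have hnS : n ∉ S := Finset.notMem_erase _ _
  have h1S : 1 ∉ insert n S := by
    intro h
    rcases Finset.mem_insert.mp h with h | h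
    · omega
    · exact (Finset.mem_erase.mp (Finset.mem_erase.mp h).2).1 rfl
  have hdiv : n.divisors = insert 1 (insert n S) := by
    rw [hS, Finset.insert_erase, Finset.insert_erase]
    · simp [Nat.mem_divisors, hpos.ne']
    · rw [Finset.mem_erase]
      exact ⟨by omega, by simp [Nat.mem_divisors, hpos.ne']⟩
  have hmem : ∀ d ∈ S, 1 < d ∧ d < n ∧ d ∣ n := by
    intro d hd
    simp only [hS, Finset.mem_erase, Nat.mem_divisors] at hd
    obtain ⟨hdn, hd1, hdvd, -⟩ := hd
    have hdpos : 0 < d := Nat.pos_of_dvd_of_pos hdvd hpos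
    exact ⟨by omega, lt_of_le_of_ne (Nat.le_of_dvd hpos hdvd) hdn, hdvd⟩
  have hprod := prod_cyclotomic_eq_X_pow_sub_one hpos ℤ
  rw [hdiv, Finset.prod_insert h1S, Finset.prod_insert hnS, cyclotomic_one] at hprod
  obtain ⟨Q0, Q1⟩ := prod_coeff01 S (fun d => cyclotomic d ℤ)
    (fun d hd => cyclotomic_coeff_zero ℤ (hmem d hd).1)
  have hQ1 : (∏ i ∈ S, cyclotomic i ℤ).coeff 1 = 1 + ArithmeticFunction.moebius n := by
    rw [Q1]
    have heq : ∑ i ∈ S, (cyclotomic i ℤ).coeff 1 = ∑ i ∈ S, -(ArithmeticFunction.moebius i : ℤ) :=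
      Finset.sum_congr rfl fun d hd => ih d (hmem d hd).2.1 (hmem d hd).1
    have hsum : ∑ d ∈ n.divisors, (ArithmeticFunction.moebius d : ℤ) = 0 := by
      have h := ArithmeticFunction.coe_zeta_mul_apply
        (f := (ArithmeticFunction.moebius : ArithmeticFunction ℤ)) (x := n)
      rw [ArithmeticFunction.coe_zeta_mul_moebius] at h
      rw [← h, ArithmeticFunction.one_apply_ne (by omega)]
    rw [hdiv, Finset.sum_insert h1S, Finset.sum_insert hnS,
      ArithmeticFunction.moebius_apply_one] at hsum
    rw [heq, Finset.sum_neg_distrib]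
    linarith
  have h01 : ((X - 1 : ℤ[X]) * (cyclotomic n ℤ * ∏ i ∈ S, cyclotomic i ℤ)).coeff 1
      = (X ^ n - 1 : ℤ[X]).coeff 1 := by rw [hprod]
  rw [coeff_one_mul', coeff_one_mul', mul_coeff_zero] at h01
  have hc0 : (cyclotomic n ℤ).coeff 0 = 1 := cyclotomic_coeff_zero ℤ hn
  simp only [coeff_sub, coeff_X_zero, coeff_one_zero, coeff_X_one, coeff_one,
    coeff_X_pow, hn.ne', if_false, if_neg (by omega : ¬ n = 1)] at h01
  rw [hc0, Q0, hQ1] at h01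
  norm_num [(by omega : ¬ (1:ℕ) = n)] at h01
  rw [if_neg (by omega : ¬ (1:ℕ) = n)] at h01
  linarith
end

section
/- For every integer n ≥ 3 that is not a power of 2, the middle coefficient of Φ_n(X), i.e., the coefficient of X^{φ(n)/2}, is an odd integer; and if n ≥ 3 is a power of 2, this middle coefficient is 0. -/
open Polynomial Finset

local notation "𝓘" => (Zsqrtd.sqrtd : GaussianInt)

lemma cyclotomic_reverse_rat {n : ℕ} (hn : 2 ≤ n) :
    (cyclotomic n ℚ).reverse = cyclotomic n ℚ := by
  have hpos : 0 < n := by omega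
  obtain ⟨ζ, hζ⟩ : ∃ ζ : ℂ, IsPrimitiveRoot ζ n :=
    ⟨Complex.exp (2 * Real.pi * Complex.I / n), Complex.isPrimitiveRoot_exp n (by omega)⟩
  have hζ0 : ζ ≠ 0 := hζ.ne_zero (by omega)
  -- reverse has coeff0 ≠ 0, so reverse is "full" and natTrailingDegree 0
  have hc0 : (cyclotomic n ℚ).coeff 0 = 1 := cyclotomic_coeff_zero ℚ (by omega)
  have htd : (cyclotomic n ℚ).natTrailingDegree = 0 := by
    rw [Polynomial.natTrailingDegree_eq_zero]
    right; rw [hc0]; exact one_ne_zero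
  have hndeg : (cyclotomic n ℚ).reverse.natDegree = (cyclotomic n ℚ).natDegree := by
    rw [Polynomial.reverse_natDegree, htd, Nat.sub_zero]
  have hmonic : (cyclotomic n ℚ).reverse.Monic := by
    have : (cyclotomic n ℚ).reverse.leadingCoeff = 1 := by
      rw [Polynomial.reverse_leadingCoeff, Polynomial.trailingCoeff, htd, hc0]
    exact this
  -- ζ is a root of reverse
  letI : Invertible (ζ⁻¹) := invertibleOfNonzero (inv_ne_zero hζ0)
  have hinv : ⅟(ζ⁻¹) = ζ := by
    rw [invOf_eq_inv _, inv_inv]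
  have hroot : Polynomial.eval₂ (algebraMap ℚ ℂ) ζ (cyclotomic n ℚ).reverse = 0 := by
    rw [← hinv]
    rw [Polynomial.eval₂_reverse_eq_zero_iff]
    have : Polynomial.eval₂ (algebraMap ℚ ℂ) (ζ⁻¹) (cyclotomic n ℚ) =
        Polynomial.eval (ζ⁻¹) (cyclotomic n ℂ) := by
      rw [← map_cyclotomic n (algebraMap ℚ ℂ), Polynomial.eval_map]
    rw [this]
    exact (hζ.inv.isRoot_cyclotomic hpos)
  -- minpoly divides
  have hmin : cyclotomic n ℚ = minpoly ℚ ζ := cyclotomic_eq_minpoly_rat hζ hpos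
  have hdvd : cyclotomic n ℚ ∣ (cyclotomic n ℚ).reverse := by
    rw [hmin]
    apply minpoly.dvd
    rw [Polynomial.aeval_def]; rw [hmin] at hroot; exact hroot
  obtain ⟨c, hc⟩ := hdvd
  have hcu : c = 1 := by
    have h1 : (cyclotomic n ℚ).Monic := cyclotomic.monic n ℚ
    have hne : cyclotomic n ℚ ≠ 0 := h1.ne_zero
    have : (cyclotomic n ℚ).natDegree = (cyclotomic n ℚ).natDegree + c.natDegree := by
      conv_lhs => rw [← hndeg, hc]
      rw [Polynomial.natDegree_mul hne]
      intro h0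
      rw [h0, mul_zero] at hc
      exact hne (Polynomial.reverse_eq_zero.mp hc)
    have hcd : c.natDegree = 0 := by omega
    have hcm : c.Monic := by
      have := hmonic
      rw [hc] at this
      exact h1.of_mul_monic_left this
    exact Polynomial.Monic.natDegree_eq_zero hcm |>.mp hcd
  rw [hc, hcu, mul_one]

lemma cyclotomic_coeff_symm {n : ℕ} (hn : 2 ≤ n) {j : ℕ} (hj : j ≤ n.totient) :
    (cyclotomic n ℤ).coeff j = (cyclotomic n ℤ).coeff (n.totient - j) := by
  have h := cyclotomic_reverse_rat hn
  have hd : (cyclotomic n ℚ).natDegree = n.totient := natDegree_cyclotomic n ℚ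
  have hq : (cyclotomic n ℚ).coeff j = (cyclotomic n ℚ).coeff (n.totient - j) := by
    conv_lhs => rw [← h]
    rw [Polynomial.coeff_reverse, hd, Polynomial.revAt_le (by omega)]
  have cast : ∀ k, (cyclotomic n ℚ).coeff k = ((cyclotomic n ℤ).coeff k : ℚ) := by
    intro k
    rw [← map_cyclotomic_int n ℚ, Polynomial.coeff_map]
    simp
  rw [cast, cast] at hq
  exact_mod_cast hq

lemma gi_sq : 𝓘 ^ 2 = (-1 : GaussianInt) := by
  rw [pow_two, Zsqrtd.dmuld]; norm_num

lemma norm_cyclotomic_eval_i {m : ℕ} (hm : Odd m) (h3 : 3 ≤ m) :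
    IsUnit ((cyclotomic m GaussianInt).eval 𝓘) := by
  have hpos : 0 < m := by omega
  have hprod := prod_cyclotomic_eq_X_pow_sub_one hpos GaussianInt
  have heval : ∏ d ∈ m.divisors, (cyclotomic d GaussianInt).eval 𝓘 = 𝓘 ^ m - 1 := by
    rw [← Polynomial.eval_prod, hprod]
    simp
  obtain ⟨t, ht⟩ := hm
  have hpow : 𝓘 ^ m = (-1 : GaussianInt) ^ t * 𝓘 := by
    rw [ht, pow_add, pow_mul, pow_one, gi_sq]
  have hnorm2 : Zsqrtd.norm (𝓘 ^ m - 1) = 2 := by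
    rcases Nat.even_or_odd t with he | ho
    · rw [hpow, he.neg_one_pow, one_mul]
      simp [Zsqrtd.norm_def]
    · rw [hpow, ho.neg_one_pow, neg_one_mul]
      simp [Zsqrtd.norm_def]
  -- split off divisors 1 and m
  have h1mem : 1 ∈ m.divisors := Nat.one_mem_divisors.mpr hpos.ne'
  have hmmem : m ∈ m.divisors \ {1} := by
    simp [Nat.mem_divisors, hpos.ne']
    omega
  have hsplit : ∏ d ∈ m.divisors, (cyclotomic d GaussianInt).eval 𝓘 =
      (cyclotomic 1 GaussianInt).eval 𝓘 *
        ((cyclotomic m GaussianInt).eval 𝓘 *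
          ∏ d ∈ (m.divisors \ {1}) \ {m}, (cyclotomic d GaussianInt).eval 𝓘) := by
    rw [Finset.prod_eq_mul_prod_sdiff_singleton_of_mem h1mem, Finset.prod_eq_mul_prod_sdiff_singleton_of_mem hmmem]
  have hnorm1 : Zsqrtd.norm ((cyclotomic 1 GaussianInt).eval 𝓘) = 2 := by
    simp [cyclotomic_one, Zsqrtd.norm_def]
  have key : Zsqrtd.norm ((cyclotomic m GaussianInt).eval 𝓘) *
      Zsqrtd.norm (∏ d ∈ (m.divisors \ {1}) \ {m}, (cyclotomic d GaussianInt).eval 𝓘) = 1 := by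
    have := congrArg Zsqrtd.norm (hsplit.symm.trans heval)
    rw [Zsqrtd.norm_mul, Zsqrtd.norm_mul, hnorm1, hnorm2] at this
    omega
  rw [← Zsqrtd.norm_eq_one_iff]
  have hnn := Zsqrtd.norm_nonneg (by norm_num : (-1 : ℤ) ≤ 0) ((cyclotomic m GaussianInt).eval 𝓘)
  have h1 : Zsqrtd.norm ((cyclotomic m GaussianInt).eval 𝓘) = 1 :=
    Int.eq_one_of_mul_eq_one_right hnn key
  rw [h1]; rfl

lemma gi_two_dvd_one_add_neg_one_pow (e : ℕ) : (2 : GaussianInt) ∣ 1 + (-1) ^ e := by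
  rcases Nat.even_or_odd e with he | he
  · rw [he.neg_one_pow]; exact ⟨1, by ring⟩
  · rw [he.neg_one_pow]; exact ⟨0, by ring⟩

lemma core_odd {m : ℕ} (hm : Odd m) (h3 : 3 ≤ m) :
    Odd ((cyclotomic m ℤ).coeff (m.totient / 2)) := by
  have h2m : 2 < m := by omega
  obtain ⟨c, hc⟩ := Nat.totient_even h2m
  have hc2 : m.totient = 2 * c := by omega
  have hcd : m.totient / 2 = c := by omega
  rw [hcd]
  set f := cyclotomic m ℤ with hf
  set F := cyclotomic m GaussianInt with hF
  have hcast : ∀ j, F.coeff j = ((f.coeff j : ℤ) : GaussianInt) := by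
    intro j
    rw [hF, ← map_cyclotomic_int m GaussianInt, Polynomial.coeff_map]
    rfl
  have hsymm : ∀ j ≤ 2 * c, F.coeff j = F.coeff (2 * c - j) := by
    intro j hj
    rw [hcast, hcast]
    have := cyclotomic_coeff_symm (n := m) (by omega) (j := j) (by omega)
    rw [hc2] at this
    rw [← hf] at this
    rw [this]
  -- eval as sum
  have hdeg : F.natDegree = 2 * c := by rw [hF, natDegree_cyclotomic, hc2]
  have heval : F.eval 𝓘 = ∑ j ∈ range (2 * c + 1), F.coeff j * 𝓘 ^ j := by
    rw [Polynomial.eval_eq_sum_range, hdeg]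
  -- split the sum
  have hsplit : ∑ j ∈ range (2 * c + 1), F.coeff j * 𝓘 ^ j =
      F.coeff c * 𝓘 ^ c +
        (∑ j ∈ range c, (F.coeff j * 𝓘 ^ j + F.coeff j * 𝓘 ^ (2 * c - j))) := by
    have h1 : range (2 * c + 1) = Finset.Ico 0 (2 * c + 1) := by rw [Finset.range_eq_Ico]
    rw [h1, ← Finset.sum_Ico_consecutive _ (Nat.zero_le (c + 1)) (by omega : c + 1 ≤ 2 * c + 1),
      ← Finset.range_eq_Ico, Finset.sum_range_succ]
    have h2 : ∑ j ∈ Finset.Ico (c + 1) (2 * c + 1), F.coeff j * 𝓘 ^ j =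
        ∑ j ∈ range c, F.coeff j * 𝓘 ^ (2 * c - j) := by
      apply Finset.sum_bij' (fun j _ => 2 * c - j) (fun j _ => 2 * c - j)
      · intro a ha
        simp only [Finset.mem_Ico] at ha
        simp only [Finset.mem_range]
        omega
      · intro a ha
        simp only [Finset.mem_range] at ha
        simp only [Finset.mem_Ico]
        omega
      · intro a ha
        simp only [Finset.mem_Ico] at ha
        omega
      · intro a ha
        simp only [Finset.mem_range] at ha
        omega
      · intro a ha
        simp only [Finset.mem_Ico] at ha
        rw [← hsymm a (by omega)]
        congr 2
        omega
    rw [h2]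
    rw [Finset.sum_add_distrib]
    ring
  -- divisibility of the tail
  have htail : (2 : GaussianInt) ∣
      ∑ j ∈ range c, (F.coeff j * 𝓘 ^ j + F.coeff j * 𝓘 ^ (2 * c - j)) := by
    apply Finset.dvd_sum
    intro j hj
    simp only [Finset.mem_range] at hj
    have h2cj : 2 * c - j = j + 2 * (c - j) := by omega
    have : F.coeff j * 𝓘 ^ j + F.coeff j * 𝓘 ^ (2 * c - j) =
        F.coeff j * 𝓘 ^ j * (1 + (-1) ^ (c - j)) := by
      rw [h2cj, pow_add, pow_mul, pow_two, Zsqrtd.dmuld]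
      push_cast
      ring
    rw [this]
    exact Dvd.dvd.mul_left (gi_two_dvd_one_add_neg_one_pow (c - j)) _
  -- conclude
  rw [Int.not_even_iff_odd.symm]
  intro heven
  obtain ⟨k, hk⟩ := heven
  have hdvd_mid : (2 : GaussianInt) ∣ F.coeff c * 𝓘 ^ c := by
    refine Dvd.dvd.mul_right ?_ _
    rw [hcast, hk]
    push_cast
    exact ⟨(k : GaussianInt), by ring⟩
  have hdvd : (2 : GaussianInt) ∣ F.eval 𝓘 := by
    rw [heval, hsplit]
    exact dvd_add hdvd_mid htail
  have hunit := norm_cyclotomic_eval_i hm h3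
  rw [← hF] at hunit
  have hnorm1 : (Zsqrtd.norm (F.eval 𝓘)).natAbs = 1 := Zsqrtd.norm_eq_one_iff.mpr hunit
  obtain ⟨w, hw⟩ := hdvd
  have : Zsqrtd.norm (F.eval 𝓘) = 4 * Zsqrtd.norm w := by
    rw [hw, Zsqrtd.norm_mul]
    norm_num [Zsqrtd.norm_def]
  rw [this, Int.natAbs_mul] at hnorm1
  norm_num at hnorm1
lemma expand_two_eq_sq (f : (ZMod 2)[X]) : Polynomial.expand (ZMod 2) 2 f = f ^ 2 := by
  have h := Polynomial.map_frobenius_expand (p := 2) f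
  rwa [ZMod.frobenius_zmod, Polynomial.map_id] at h

lemma pow_two_pow_eq_expand (e : ℕ) (g : (ZMod 2)[X]) :
    g ^ (2 ^ e) = Polynomial.expand (ZMod 2) (2 ^ e) g := by
  induction e with
  | zero => simp
  | succ e ih =>
    calc g ^ 2 ^ (e + 1) = (g ^ 2 ^ e) ^ 2 := by rw [← pow_mul, ← pow_succ]
      _ = Polynomial.expand (ZMod 2) 2 (Polynomial.expand (ZMod 2) (2 ^ e) g) := by
          rw [ih, expand_two_eq_sq]
      _ = Polynomial.expand (ZMod 2) (2 ^ (e + 1)) g := by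
          rw [Polynomial.expand_expand]
          congr 1
          ring_nf

lemma int_odd_cast_zmod2 {a : ℤ} (h : Odd a) : ((a : ℤ) : ZMod 2) = 1 := by
  obtain ⟨k, hk⟩ := h
  have h2 : (2 : ZMod 2) = 0 := rfl
  rw [hk]
  push_cast
  rw [h2]
  ring

lemma coeff_zmod2_eq_one {m : ℕ} (hm : Odd m) (h3 : 3 ≤ m) :
    (cyclotomic m (ZMod 2)).coeff (m.totient / 2) = 1 := by
  have hodd := core_odd hm h3
  have hcast : (cyclotomic m (ZMod 2)).coeff (m.totient / 2)
      = (((cyclotomic m ℤ).coeff (m.totient / 2) : ℤ) : ZMod 2) := by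
    rw [← map_cyclotomic_int m (ZMod 2), Polynomial.coeff_map]
    rfl
  rw [hcast, int_odd_cast_zmod2 hodd]

lemma cyclotomic_two_pow_eq (k : ℕ) (hk : 1 ≤ k) :
    cyclotomic (2 ^ k) ℤ = Polynomial.expand ℤ (2 ^ (k - 1)) (cyclotomic 2 ℤ) := by
  induction k with
  | zero => omega
  | succ k ih =>
    rcases Nat.eq_or_lt_of_le hk with h1 | h1
    · simp [← h1]
    · have hk1 : 1 ≤ k := by omega
      have h2 : (2:ℕ) ∣ 2 ^ k := dvd_pow_self 2 (by omega)
      have hexp := cyclotomic_expand_eq_cyclotomic Nat.prime_two h2 ℤ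
      rw [show (2:ℕ)^(k+1) = 2^k * 2 by ring, ← hexp, ih hk1, Polynomial.expand_expand]
      congr 1
      have hkk : k + 1 - 1 = k - 1 + 1 := by omega
      rw [hkk, pow_succ]
      ring_nf

theorem cyclotomic_middle_coeff (n : ℕ) (hn : 3 ≤ n) :
    (¬(∃ k, n = 2 ^ k) → Odd ((cyclotomic n ℤ).coeff (n.totient / 2))) ∧
      ((∃ k, n = 2 ^ k) → (cyclotomic n ℤ).coeff (n.totient / 2) = 0) := by
  constructor
  · intro hnp
    have hn0 : n ≠ 0 := by omega
    obtain ⟨k, m, hm2, hnm⟩ : ∃ k m, ¬ 2 ∣ m ∧ 2 ^ k * m = n :=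
      ⟨n.factorization 2, n / 2 ^ (n.factorization 2),
        Nat.not_dvd_ordCompl Nat.prime_two hn0, Nat.ordProj_mul_ordCompl_eq_self n 2⟩
    have hmodd : Odd m := Nat.odd_iff.mpr (by omega)
    have hm1 : m ≠ 1 := by
      intro h1
      rw [h1, mul_one] at hnm
      exact hnp ⟨k, hnm.symm⟩
    have hm0 : m ≠ 0 := by
      intro h0
      rw [h0, mul_zero] at hnm
      omega
    have hm3 : 3 ≤ m := by
      rcases hmodd with ⟨t, ht⟩
      omega
    -- goal: coeff over ZMod 2 is 1
    suffices hsuff : (((cyclotomic n ℤ).coeff (n.totient / 2) : ℤ) : ZMod 2) = 1 by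
      rw [Int.odd_iff]
      by_contra hmod
      have heven : (2:ℤ) ∣ (cyclotomic n ℤ).coeff (n.totient / 2) := by omega
      obtain ⟨w, hw⟩ := heven
      rw [hw] at hsuff
      push_cast at hsuff
      rw [show (2 : ZMod 2) = 0 from rfl] at hsuff
      rw [zero_mul] at hsuff
      exact one_ne_zero hsuff.symm
    have hbridge : (((cyclotomic n ℤ).coeff (n.totient / 2) : ℤ) : ZMod 2)
        = (cyclotomic n (ZMod 2)).coeff (n.totient / 2) := by
      rw [← map_cyclotomic_int n (ZMod 2), Polynomial.coeff_map]
      rfl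
    rw [hbridge]
    rcases Nat.eq_zero_or_pos k with hk0 | hk1
    · have hnm' : n = m := by rw [← hnm, hk0, pow_zero, one_mul]
      rw [hnm']
      exact coeff_zmod2_eq_one hmodd hm3
    · -- totient computations
      have hcop : Nat.Coprime (2 ^ k) m :=
        Nat.Coprime.pow_left k ((Nat.Prime.coprime_iff_not_dvd Nat.prime_two).mpr hm2)
      have htot : n.totient = 2 ^ (k - 1) * m.totient := by
        rw [← hnm, Nat.totient_mul hcop, Nat.totient_prime_pow Nat.prime_two hk1]
        ring
      obtain ⟨c, hc⟩ := Nat.totient_even (show 2 < m by omega)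
      have hc2 : m.totient = 2 * c := by omega
      have hcc : m.totient / 2 = c := by omega
      have hidx : n.totient / 2 = 2 ^ (k - 1) * c := by
        rw [htot, hc2, show 2 ^ (k-1) * (2 * c) = 2 ^ (k-1) * c * 2 by ring,
          Nat.mul_div_cancel _ (by norm_num)]
      have hcyc : cyclotomic n (ZMod 2) = cyclotomic m (ZMod 2) ^ (2 ^ k - 2 ^ (k - 1)) := by
        rw [← hnm]
        exact cyclotomic_mul_prime_pow_eq (ZMod 2) hm2 hk1
      have hex : (2:ℕ) ^ k - 2 ^ (k - 1) = 2 ^ (k - 1) := by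
        have hpk : (2:ℕ) ^ k = 2 ^ (k - 1) * 2 := by
          rw [← pow_succ]
          congr 1
          omega
        rw [hpk]
        omega
      rw [hcyc, hex, pow_two_pow_eq_expand, hidx,
        Polynomial.coeff_expand_mul' (by positivity), ← hcc]
      exact coeff_zmod2_eq_one hmodd hm3
  · rintro ⟨k, rfl⟩
    have hk2 : 2 ≤ k := by
      rcases k with _ | _ | k
      · omega
      · omega
      · omega
    rw [cyclotomic_two_pow_eq k (by omega), cyclotomic_two]
    have htot : (2 ^ k).totient = 2 ^ (k - 1) := by
      rw [Nat.totient_prime_pow Nat.prime_two (by omega)]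
      norm_num
    have hidx : (2 ^ k).totient / 2 = 2 ^ (k - 2) := by
      rw [htot]
      have h12 : (2:ℕ) ^ (k - 1) = 2 ^ (k - 2) * 2 := by
        rw [← pow_succ]
        congr 1
        omega
      rw [h12, Nat.mul_div_cancel _ (by norm_num)]
    rw [hidx, Polynomial.coeff_expand (by positivity)]
    rw [if_neg]
    intro hdvd
    have hle : (2:ℕ) ^ (k - 1) ≤ 2 ^ (k - 2) :=
      Nat.le_of_dvd (by positivity) hdvd
    have hlt : (2:ℕ) ^ (k - 2) < 2 ^ (k - 1) :=
      Nat.pow_lt_pow_right (by omega) (by omega)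
    omega
end

section
/- Define the n-th inverse cyclotomic polynomial Ψ_n(X) = (X^n − 1)/Φ_n(X). For all primes p < q, Ψ_{pq}(X) = ∑_{j=q}^{p+q-1} X^j − ∑_{j=0}^{p-1} X^j; in particular every coefficient of Ψ_{pq} lies in {-1, 0, 1}. -/
open Polynomial

lemma divisors_pq {p q : ℕ} (hp : p.Prime) (hq : q.Prime) (hpq : p < q) :
    (p * q).divisors = {1, p, q, p * q} := by
  rw [Nat.divisors_mul, hp.divisors, hq.divisors]
  ext d
  simp [Finset.mem_mul]
  aesop

/-- The `n`-th inverse cyclotomic polynomial `(X^n - 1) / Φ_n(X)`. -/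
noncomputable def inverseCyclotomic (n : ℕ) : Polynomial ℤ :=
  (X ^ n - 1) /ₘ cyclotomic n ℤ

lemma inverseCyclotomic_key (p q : ℕ) (hp : p.Prime) (hq : q.Prime) (hpq : p < q) :
    inverseCyclotomic (p * q) =
      (∑ j ∈ Finset.Ico q (p + q), X ^ j) - ∑ j ∈ Finset.range p, X ^ j := by
  have hp1 : Fact p.Prime := ⟨hp⟩
  have hq1 : Fact q.Prime := ⟨hq⟩
  set F : Polynomial ℤ := (∑ j ∈ Finset.Ico q (p + q), X ^ j) - ∑ j ∈ Finset.range p, X ^ j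
    with hF
  have hIco : ∑ j ∈ Finset.Ico q (p + q), (X : Polynomial ℤ) ^ j =
      X ^ q * ∑ i ∈ Finset.range p, X ^ i := by
    rw [Finset.sum_Ico_eq_sum_range, Finset.mul_sum]
    simp [add_tsub_cancel_right, pow_add]
  have hF2 : F = (X ^ q - 1) * ∑ i ∈ Finset.range p, X ^ i := by
    rw [hF, hIco]; ring
  have hne : p * q ≠ 0 := Nat.mul_ne_zero hp.pos.ne' hq.pos.ne'
  have hmain : X ^ (p * q) - 1 = cyclotomic (p * q) ℤ * F := by
    rw [← prod_cyclotomic_eq_X_pow_sub_one (Nat.pos_of_ne_zero hne) ℤ,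
      divisors_pq hp hq hpq]
    have h1p : (1 : ℕ) ≠ p := fun h => hp.one_lt.ne' h.symm
    have h1q : (1 : ℕ) ≠ q := fun h => hq.one_lt.ne' h.symm
    have h1pq : (1 : ℕ) ≠ p * q := fun h => hne (by nlinarith [hp.two_le, hq.two_le])
    have hpq' : p ≠ q := hpq.ne
    have hppq : p ≠ p * q := fun h => by nlinarith [hq.two_le, hp.pos]
    have hqpq : q ≠ p * q := fun h => by nlinarith [hp.two_le, hq.pos]
    rw [Finset.prod_insert (by simp [h1p, h1q, h1pq]),
      Finset.prod_insert (by simp [hpq', hppq]),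
      Finset.prod_insert (by simp [hqpq]), Finset.prod_singleton]
    rw [cyclotomic_one, cyclotomic_prime, cyclotomic_prime, hF2]
    have hgq : (X - 1 : Polynomial ℤ) * ∑ i ∈ Finset.range q, X ^ i = X ^ q - 1 := by
      rw [mul_comm, geom_sum_mul]
    linear_combination ((∑ i ∈ Finset.range p, (X:Polynomial ℤ) ^ i) *
      cyclotomic (p * q) ℤ) * hgq
  rw [inverseCyclotomic, hmain, mul_divByMonic_cancel_left _ (cyclotomic.monic _ ℤ)]

theorem inverseCyclotomic_binary (p q : ℕ) (hp : p.Prime) (hq : q.Prime) (hpq : p < q) :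
    inverseCyclotomic (p * q) =
        (∑ j ∈ Finset.Ico q (p + q), X ^ j) - ∑ j ∈ Finset.range p, X ^ j ∧
      ∀ j : ℕ, |(inverseCyclotomic (p * q)).coeff j| ≤ 1 := by
  have hkey := inverseCyclotomic_key p q hp hq hpq
  refine ⟨hkey, fun j => ?_⟩
  rw [hkey]
  simp only [Polynomial.coeff_sub, Polynomial.finset_sum_coeff, Polynomial.coeff_X_pow]
  rw [Finset.sum_ite_eq (Finset.Ico q (p + q)) j (fun _ => (1:ℤ)),
    Finset.sum_ite_eq (Finset.range p) j (fun _ => (1:ℤ))]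
  simp only [Finset.mem_Ico, Finset.mem_range]
  split_ifs <;> simp
end
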